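/- Let A be a Banach algebra over ℝ, R > 0, and let (a_k) be a sequence of real numbers such that Σ_{k=0}^∞ |a_k|·‖M‖^k converges for every M ∈ A with ‖M‖ ≤ R. Then the function f defined on the open ball B_R(0) ⊆ A by f(M) = Σ_{k=0}^∞ a_k M^k is infinitely Fréchet differentiable (ContDiffOn ℝ ∞) on B_R(0), and for every M with ‖M‖ < R and every H ∈ A the Fréchet derivative is given by (fderiv f M)(H) = Σ_{k=1}^∞ a_k Σ_{i=0}^{k−1} M^{k−1−i} H M^{i}. -/

import Mathlib

open scoped BigOperators ContDiff

open ContinuousLinearMap in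
theorem aux_hasFDerivAt_pow {A : Type*} [NormedRing A] [NormedAlgebra ℝ A]
    (n : ℕ) (M : A) :
    HasFDerivAt (fun x : A => x ^ n)
      (∑ i ∈ Finset.range n, mulLeftRight ℝ A (M ^ (n - 1 - i)) (M ^ i)) M := by
  induction n with
  | zero => simpa using hasFDerivAt_const (1 : A) M
  | succ n ih =>
    have h := ih.mul' (hasFDerivAt_id M)
    have e : ((fun y : A => y ^ n) * _root_.id) = fun x : A => x ^ (n + 1) := by
      funext x; rw [pow_succ]; rfl
    rw [e] at h
    refine h.congr_fderiv (Eq.symm ?_)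
    ext H
    simp only [ContinuousLinearMap.add_apply, ContinuousLinearMap.smul_apply,
      ContinuousLinearMap.coe_id', id_eq, ContinuousLinearMap.smulRight_apply, op_smul_eq_mul,
      ContinuousLinearMap.sum_apply, mulLeftRight_apply, smul_eq_mul,
      Finset.sum_apply, ContinuousLinearMap.coe_sum']
    rw [Finset.sum_range_succ']
    simp only [Nat.add_sub_cancel, Nat.sub_zero, pow_zero, mul_one, Finset.sum_mul]
    rw [add_comm]
    congr 1
    apply Finset.sum_congr rfl
    intro i hi
    simp only [Finset.mem_range] at hi
    have e1 : n - (i + 1) = n - 1 - i := by omega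
    rw [e1, pow_succ]; simp [mul_assoc]

theorem aux_norm_pow_le {A : Type*} [NormedRing A] (x : A) {r : ℝ} (h : ‖x‖ ≤ r) (j : ℕ) :
    ‖x ^ j‖ ≤ max ‖(1 : A)‖ 1 * r ^ j := by
  have hr0 : (0 : ℝ) ≤ r := (norm_nonneg x).trans h
  rcases Nat.eq_zero_or_pos j with hj | hj
  · subst hj; simpa using le_max_left ‖(1 : A)‖ 1
  · calc ‖x ^ j‖ ≤ ‖x‖ ^ j := norm_pow_le' x hj
      _ ≤ r ^ j := pow_le_pow_left₀ (norm_nonneg x) h j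
      _ ≤ max ‖(1 : A)‖ 1 * r ^ j :=
        le_mul_of_one_le_left (pow_nonneg hr0 j) (le_max_right _ _)

/-- Lemma 5.13 of the paper: if `Σ |a_k|·‖M‖^k` converges for `‖M‖ ≤ R` in a real Banach
algebra `A`, then `f(M) = Σ a_k M^k` is `C^∞` (infinitely Fréchet differentiable) on the
open ball `B_R(0)`, with Fréchet derivative
`(fderiv f M)(H) = Σ_{k≥1} a_k Σ_{i=0}^{k−1} M^{k−1−i} H M^i`. -/
theorem powerSeries_contDiffOn_ball {A : Type*} [NormedRing A] [NormedAlgebra ℝ A]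
    [CompleteSpace A] (R : ℝ) (hR : 0 < R) (a : ℕ → ℝ)
    (hconv : ∀ M : A, ‖M‖ ≤ R → Summable fun k : ℕ => |a k| * ‖M‖ ^ k) :
    ContDiffOn ℝ ∞ (fun M : A => ∑' k : ℕ, a k • M ^ k) (Metric.ball (0 : A) R) ∧
    ∀ M : A, ‖M‖ < R → ∀ H : A,
      fderiv ℝ (fun M : A => ∑' k : ℕ, a k • M ^ k) M H
        = ∑' m : ℕ, a (m + 1) •
            ∑ i ∈ Finset.range (m + 1), M ^ (m - i) * H * M ^ i := by
  rcases subsingleton_or_nontrivial A with hA | hA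
  · constructor
    · have : (fun M : A => ∑' k : ℕ, a k • M ^ k) = fun _ => (0 : A) :=
        funext fun _ => Subsingleton.elim _ _
      rw [this]; exact contDiffOn_const
    · intro M _ H; exact Subsingleton.elim _ _
  set C : ℝ := max ‖(1 : A)‖ 1 with hCdef
  have hC1 : (1 : ℝ) ≤ C := le_max_right _ _
  have hC0 : (0 : ℝ) < C := lt_of_lt_of_le one_pos hC1
  -- summability of coefficients at radius R
  obtain ⟨x, hx⟩ := exists_ne (0 : A)
  have hxn : ‖x‖ ≠ 0 := by simpa using hx
  have hMR : ‖(R / ‖x‖) • x‖ = R := by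
    rw [norm_smul, Real.norm_eq_abs, abs_of_nonneg (by positivity),
      div_mul_cancel₀ _ hxn]
  have sumR : Summable fun k : ℕ => |a k| * R ^ k := by
    have h := hconv ((R / ‖x‖) • x) (le_of_eq hMR)
    rwa [hMR] at h
  set B : ℝ := ∑' k : ℕ, |a k| * R ^ k with hBdef
  have hB : ∀ k, |a k| * R ^ k ≤ B := fun k => sumR.le_tsum k fun j _ => by positivity
  -- pointwise summability of the series
  have hsum_apply : ∀ y : A, ‖y‖ ≤ R → Summable fun n : ℕ => a n • y ^ n := by
    intro y hy
    refine Summable.of_norm ?_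
    have h1 : Summable fun n : ℕ => C * (|a n| * ‖y‖ ^ n) := (hconv y hy).mul_left C
    refine Summable.of_nonneg_of_le (fun n => norm_nonneg _) (fun n => ?_) h1
    rw [norm_smul, Real.norm_eq_abs]
    calc |a n| * ‖y ^ n‖ ≤ |a n| * (C * ‖y‖ ^ n) :=
          mul_le_mul_of_nonneg_left (aux_norm_pow_le y le_rfl n) (abs_nonneg _)
      _ = C * (|a n| * ‖y‖ ^ n) := by ring
  -- analyticity via the formal power series of scalars
  have hps : HasFPowerSeriesOnBall (fun M : A => ∑' k : ℕ, a k • M ^ k)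
      (FormalMultilinearSeries.ofScalars A a) 0 (ENNReal.ofReal R) := by
    constructor
    · have hcoe : ((R.toNNReal : ℝ)) = R := Real.coe_toNNReal R hR.le
      have hs : Summable fun n : ℕ =>
          ‖FormalMultilinearSeries.ofScalars A a n‖ * (R.toNNReal : ℝ) ^ n := by
        simp_rw [hcoe]
        rw [← summable_nat_add_iff 1]
        refine Summable.of_nonneg_of_le (fun n => by positivity) (fun n => ?_)
          ((summable_nat_add_iff 1).mpr sumR)
        have := FormalMultilinearSeries.ofScalars_norm_le A a (n + 1) (Nat.succ_pos n)
        rw [Real.norm_eq_abs] at this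
        exact mul_le_mul_of_nonneg_right this (by positivity)
      exact (FormalMultilinearSeries.ofScalars A a).le_radius_of_summable_norm hs
    · exact ENNReal.ofReal_pos.mpr hR
    · intro y hy
      rw [Metric.emetric_ball, mem_ball_zero_iff] at hy
      rw [zero_add]
      simpa only [FormalMultilinearSeries.ofScalars_apply_eq]
        using (hsum_apply y hy.le).hasSum
  refine ⟨?_, ?_⟩
  · have h1 := hps.analyticOnNhd
    rw [Metric.emetric_ball] at h1
    exact h1.contDiffOn Metric.isOpen_ball.uniqueDiffOn
  intro M hM H
  obtain ⟨r, hMr, hrR⟩ : ∃ r : ℝ, ‖M‖ < r ∧ r < R :=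
    ⟨(‖M‖ + R) / 2, by linarith, by linarith⟩
  have hr0 : (0 : ℝ) < r := (norm_nonneg M).trans_lt hMr
  set D : ℕ → A → (A →L[ℝ] A) := fun n x =>
    a n • ∑ i ∈ Finset.range n,
      ContinuousLinearMap.mulLeftRight ℝ A (x ^ (n - 1 - i)) (x ^ i) with hDdef
  set u : ℕ → ℝ := fun n => B * C ^ 2 / R * ((n : ℝ) * (r / R) ^ (n - 1)) with hudef
  have hu : Summable u := by
    apply Summable.mul_left
    rw [← summable_nat_add_iff 1]
    simp only [Nat.add_sub_cancel]
    have hq : ‖r / R‖ < 1 := by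
      rw [Real.norm_eq_abs, abs_of_nonneg (by positivity), div_lt_one hR]
      exact hrR
    have h1 := summable_pow_mul_geometric_of_norm_lt_one 1 hq
    have h0 := summable_geometric_of_norm_lt_one hq
    refine Summable.congr (h1.add h0) fun n => ?_
    push_cast
    ring
  have hD_bound : ∀ n : ℕ, ∀ x : A, x ∈ Metric.ball (0 : A) r → ‖D n x‖ ≤ u n := by
    intro n x hx
    rw [mem_ball_zero_iff] at hx
    have hx' : ‖x‖ ≤ r := hx.le
    have step : ∀ i ∈ Finset.range n,
        ‖ContinuousLinearMap.mulLeftRight ℝ A (x ^ (n - 1 - i)) (x ^ i)‖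
          ≤ C ^ 2 * r ^ (n - 1) := by
      intro i hi
      simp only [Finset.mem_range] at hi
      calc ‖ContinuousLinearMap.mulLeftRight ℝ A (x ^ (n - 1 - i)) (x ^ i)‖
          ≤ ‖x ^ (n - 1 - i)‖ * ‖x ^ i‖ :=
            ContinuousLinearMap.opNorm_mulLeftRight_apply_apply_le ℝ A _ _
        _ ≤ (C * r ^ (n - 1 - i)) * (C * r ^ i) :=
            mul_le_mul (aux_norm_pow_le x hx' _) (aux_norm_pow_le x hx' _)
              (norm_nonneg _) (by positivity)
        _ = C ^ 2 * r ^ (n - 1 - i + i) := by rw [pow_add]; ring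
        _ = C ^ 2 * r ^ (n - 1) := by congr 2; omega
    have hsumle : ‖∑ i ∈ Finset.range n,
        ContinuousLinearMap.mulLeftRight ℝ A (x ^ (n - 1 - i)) (x ^ i)‖
          ≤ (n : ℝ) * (C ^ 2 * r ^ (n - 1)) := by
      refine (norm_sum_le _ _).trans ?_
      calc ∑ i ∈ Finset.range n, ‖ContinuousLinearMap.mulLeftRight ℝ A
            (x ^ (n - 1 - i)) (x ^ i)‖
          ≤ ∑ _i ∈ Finset.range n, C ^ 2 * r ^ (n - 1) := Finset.sum_le_sum step
        _ = (n : ℝ) * (C ^ 2 * r ^ (n - 1)) := by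
            rw [Finset.sum_const, Finset.card_range, nsmul_eq_mul]
    have h1 : ‖D n x‖ ≤ |a n| * ((n : ℝ) * (C ^ 2 * r ^ (n - 1))) := by
      have he : ‖D n x‖ = |a n| * ‖∑ i ∈ Finset.range n,
          ContinuousLinearMap.mulLeftRight ℝ A (x ^ (n - 1 - i)) (x ^ i)‖ := by
        simp only [hDdef]
        rw [show (|a n| : ℝ) = ‖a n‖ from rfl]
        exact norm_smul (a n) (∑ i ∈ Finset.range n,
          ContinuousLinearMap.mulLeftRight ℝ A (x ^ (n - 1 - i)) (x ^ i))
      rw [he]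
      exact mul_le_mul_of_nonneg_left hsumle (abs_nonneg _)
    refine h1.trans ?_
    rcases n with _ | m
    · simp [hudef]
    · have ha : |a (m + 1)| ≤ B / R ^ (m + 1) :=
        (le_div_iff₀ (pow_pos hR _)).mpr (hB (m + 1))
      have h2 : |a (m + 1)| * (((m : ℝ) + 1) * (C ^ 2 * r ^ m))
          ≤ (B / R ^ (m + 1)) * (((m : ℝ) + 1) * (C ^ 2 * r ^ m)) :=
        mul_le_mul_of_nonneg_right ha (by positivity)
      refine le_trans (by push_cast at h2 ⊢; simpa using h2) (le_of_eq ?_)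
      rw [hudef]
      simp only [Nat.add_sub_cancel]
      rw [div_pow]
      field_simp
      push_cast
      ring
  have hder : ∀ n : ℕ, ∀ x : A, x ∈ Metric.ball (0 : A) r →
      HasFDerivAt (fun y : A => a n • y ^ n) (D n x) x :=
    fun n x _ => (aux_hasFDerivAt_pow n x).const_smul (a n)
  have hsum0 : Summable fun n : ℕ => a n • (0 : A) ^ n := by
    refine summable_of_ne_finset_zero (s := {0}) fun n hn => ?_
    simp only [Finset.mem_singleton] at hn
    rw [zero_pow hn, smul_zero]
  have hMem : M ∈ Metric.ball (0 : A) r := by rwa [mem_ball_zero_iff]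
  have h0Mem : (0 : A) ∈ Metric.ball (0 : A) r := Metric.mem_ball_self hr0
  have hfd : HasFDerivAt (fun y : A => ∑' n : ℕ, a n • y ^ n) (∑' n : ℕ, D n M) M :=
    hasFDerivAt_tsum_of_isPreconnected hu Metric.isOpen_ball
      (convex_ball (0 : A) r).isPreconnected hder hD_bound h0Mem hsum0 hMem
  have hDsummable : Summable fun n : ℕ => D n M :=
    Summable.of_norm (Summable.of_nonneg_of_le (fun n => norm_nonneg _)
      (fun n => hD_bound n M hMem) hu)
  rw [hfd.fderiv]
  have happ : (∑' n : ℕ, D n M) H = ∑' n : ℕ, D n M H := by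
    have h := (ContinuousLinearMap.apply ℝ A H).map_tsum hDsummable
    simpa using h
  rw [happ]
  have hsummApp : Summable fun n : ℕ => D n M H := by
    have h := hDsummable.map (ContinuousLinearMap.apply ℝ A H)
      (ContinuousLinearMap.apply ℝ A H).continuous
    simpa [Function.comp_def] using h
  rw [hsummApp.tsum_eq_zero_add]
  have hD0 : D 0 M H = 0 := by simp [hDdef]
  rw [hD0, zero_add]
  refine tsum_congr fun m => ?_
  simp [hDdef, ContinuousLinearMap.smul_apply, ContinuousLinearMap.coe_sum',
    Finset.sum_apply, ContinuousLinearMap.mulLeftRight_apply, Nat.add_sub_cancel]
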